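/- Let β > 0, α > 0 and η > 0. Then there exist constants c₄, c₅ ≥ 0 (depending only on α, β, η) such that for every real r > max(1, η^{1/α}), P( W₁ W₂ ≥ r^α / η ) ≤ c₄ r^{−αβ} + c₅ r^{−αβ} log r. -/

import Mathlib

open MeasureTheory Set Real
open scoped ENNReal

/-- The Pareto(β) probability measure on `ℝ`, with density `w ↦ β w^{−β−1} 1_{[1,∞)}(w)`
with respect to Lebesgue measure. -/
noncomputable def pareto (β : ℝ) : Measure ℝ :=
  volume.withDensity (Set.indicator (Set.Ici 1) fun w => ENNReal.ofReal (β * w ^ (-β - 1)))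

lemma pareto_eq (β : ℝ) : pareto β = ProbabilityTheory.paretoMeasure 1 β := by
  unfold pareto ProbabilityTheory.paretoMeasure
  congr 1
  funext x
  rw [ProbabilityTheory.paretoPDF_eq]
  by_cases hx : (1:ℝ) ≤ x
  · simp [Set.indicator_of_mem, hx, Real.one_rpow]
    ring_nf
  · simp [Set.indicator_of_notMem, hx]

lemma tail_lintegral (β : ℝ) (hβ : 0 < β) {a : ℝ} (ha : 0 < a) :
    ∫⁻ x in Ioi a, ENNReal.ofReal (β * x ^ (-β - 1)) = ENNReal.ofReal (a ^ (-β)) := by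
  have hint : IntegrableOn (fun x : ℝ => β * x ^ (-β - 1)) (Ioi a) :=
    (integrableOn_Ioi_rpow_of_lt (by linarith) ha).const_mul β
  have hnn : 0 ≤ᵐ[volume.restrict (Ioi a)] fun x : ℝ => β * x ^ (-β - 1) := by
    rw [Filter.EventuallyLE, ae_restrict_iff' measurableSet_Ioi]
    filter_upwards with x hx
    have : (0:ℝ) < x := lt_trans ha hx
    positivity
  rw [← ofReal_integral_eq_lintegral_ofReal hint hnn]
  congr 1
  rw [MeasureTheory.integral_const_mul, integral_Ioi_rpow_of_lt (by linarith) ha]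
  have : -β - 1 + 1 = -β := by ring
  rw [this]
  field_simp

lemma pareto_Ici (β : ℝ) (hβ : 0 < β) {a : ℝ} (ha : 1 ≤ a) :
    pareto β (Ici a) = ENNReal.ofReal (a ^ (-β)) := by
  have ha0 : (0:ℝ) < a := lt_of_lt_of_le one_pos ha
  rw [pareto, withDensity_apply _ measurableSet_Ici,
    ← Measure.restrict_congr_set Ioi_ae_eq_Ici]
  have heq : ∫⁻ x in Ioi a, (Ici 1).indicator (fun w => ENNReal.ofReal (β * w ^ (-β - 1))) x
      = ∫⁻ x in Ioi a, ENNReal.ofReal (β * x ^ (-β - 1)) :=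
    setLIntegral_congr_fun measurableSet_Ioi ((fun x hx =>
      Set.indicator_of_mem (Set.mem_Ici.mpr (le_trans ha (le_of_lt hx))) _))
  rw [heq, tail_lintegral β hβ ha0]

lemma pareto_prob (β : ℝ) (hβ : 0 < β) : IsProbabilityMeasure (pareto β) := by
  rw [pareto_eq]
  exact ProbabilityTheory.isProbabilityMeasure_paretoMeasure one_pos hβ

/-- For `β > 0`, `α > 0`, `η > 0`, there are constants `c₄, c₅ ≥ 0`
such that for every `r > max(1, η^{1/α})`,
`P(W₁W₂ ≥ r^α/η) ≤ c₄ r^{−αβ} + c₅ r^{−αβ} log r`,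
where `W₁, W₂` are independent Pareto(β) random variables. -/
theorem stmt10 (β α η : ℝ) (hβ : 0 < β) (hα : 0 < α) (hη : 0 < η) :
    ∃ c₄ c₅ : ℝ, 0 ≤ c₄ ∧ 0 ≤ c₅ ∧
      ∀ r : ℝ, max 1 (η ^ (1 / α)) < r →
        ((pareto β).prod (pareto β)) {p : ℝ × ℝ | r ^ α / η ≤ p.1 * p.2} ≤
          ENNReal.ofReal (c₄ * r ^ (-(α * β)) + c₅ * r ^ (-(α * β)) * Real.log r) := by
  haveI : IsProbabilityMeasure (pareto β) := pareto_prob β hβ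
  refine ⟨η ^ β * (1 + β * |Real.log η|), η ^ β * (β * α), by positivity, by positivity, ?_⟩
  intro r hr
  have hr1 : (1:ℝ) < r := lt_of_le_of_lt (le_max_left _ _) hr
  have hr0 : (0:ℝ) < r := lt_trans one_pos hr1
  have hηr : η ^ (1 / α) < r := lt_of_le_of_lt (le_max_right _ _) hr
  have hrα : η < r ^ α := by
    have h1 : (η ^ (1/α)) ^ α < r ^ α :=
      Real.rpow_lt_rpow (Real.rpow_nonneg hη.le _) hηr hα
    rwa [← Real.rpow_mul hη.le, one_div_mul_cancel hα.ne', Real.rpow_one] at h1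
  set t := r ^ α / η with htdef
  have ht1 : 1 < t := (one_lt_div hη).mpr hrα
  have ht0 : (0:ℝ) < t := lt_trans one_pos ht1
  have hS : MeasurableSet {p : ℝ × ℝ | t ≤ p.1 * p.2} :=
    measurableSet_le measurable_const (measurable_fst.mul measurable_snd)
  set g : ℝ → ℝ≥0∞ := fun x => pareto β (Prod.mk x ⁻¹' {p : ℝ × ℝ | t ≤ p.1 * p.2}) with hg
  have hgm : Measurable g := measurable_measure_prodMk_left hS
  have hFm : Measurable ((Ici (1:ℝ)).indicator fun w => ENNReal.ofReal (β * w ^ (-β - 1))) :=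
    ((measurable_id.pow_const _).const_mul β).ennreal_ofReal.indicator measurableSet_Ici
  have hg1 : ∀ x, g x ≤ 1 := fun x => prob_le_one
  -- the slice computation
  have hslice : ∀ x : ℝ, 0 < x → Prod.mk x ⁻¹' {p : ℝ × ℝ | t ≤ p.1 * p.2} = Ici (t / x) := by
    intro x hx
    ext y
    simp only [Set.mem_preimage, Set.mem_setOf_eq, Set.mem_Ici, div_le_iff₀ hx, mul_comm]
  have key : ((pareto β).prod (pareto β)) {p : ℝ × ℝ | t ≤ p.1 * p.2}
      = (∫⁻ x in Ico 1 t, ENNReal.ofReal (β * x ^ (-β - 1)) * g x)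
        + ∫⁻ x in Ici t, ENNReal.ofReal (β * x ^ (-β - 1)) * g x := by
    rw [Measure.prod_apply hS]
    show ∫⁻ x, g x ∂(pareto β) = _
    rw [pareto, lintegral_withDensity_eq_lintegral_mul _ hFm hgm]
    have hind : (((Ici (1:ℝ)).indicator fun w => ENNReal.ofReal (β * w ^ (-β - 1))) * g)
        = (Ici (1:ℝ)).indicator (fun x => ENNReal.ofReal (β * x ^ (-β - 1)) * g x) := by
      funext x
      by_cases hx : x ∈ Ici (1:ℝ)
      · simp [Set.indicator_of_mem hx]
      · simp [Set.indicator_of_notMem hx]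
    have hcover : Ici (1:ℝ) = Ico 1 t ∪ Ici t := (Ico_union_Ici_eq_Ici ht1.le).symm
    have hdisj : Disjoint (Ico (1:ℝ) t) (Ici t) := by
      rw [Set.disjoint_left]; intro x hx hx'; exact absurd hx.2 (not_lt.mpr hx')
    rw [hind, lintegral_indicator measurableSet_Ici, hcover,
      lintegral_union measurableSet_Ici hdisj]
  -- Term A
  have hA : (∫⁻ x in Ico 1 t, ENNReal.ofReal (β * x ^ (-β - 1)) * g x)
      = ENNReal.ofReal (β * t ^ (-β) * Real.log t) := by
    have h1 : ∀ x ∈ Ico (1:ℝ) t, ENNReal.ofReal (β * x ^ (-β - 1)) * g x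
        = ENNReal.ofReal (β * t ^ (-β) * x⁻¹) := by
      intro x hx
      have hx1 : (1:ℝ) ≤ x := hx.1
      have hx0 : (0:ℝ) < x := lt_of_lt_of_le one_pos hx1
      have htx1 : (1:ℝ) ≤ t / x := (one_le_div hx0).mpr hx.2.le
      have hgx : g x = ENNReal.ofReal ((t / x) ^ (-β)) := by
        rw [hg]
        simp only
        rw [hslice x hx0, pareto_Ici β hβ htx1]
      rw [hgx, ← ENNReal.ofReal_mul (by positivity)]
      congr 1
      have hxpow : x ^ (-β - 1) / x ^ (-β) = x⁻¹ := by
        rw [← Real.rpow_sub hx0]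
        have he : -β - 1 - -β = -1 := by ring
        rw [he, Real.rpow_neg_one]
      rw [Real.div_rpow ht0.le hx0.le]
      calc β * x ^ (-β - 1) * (t ^ (-β) / x ^ (-β))
          = β * t ^ (-β) * (x ^ (-β - 1) / x ^ (-β)) := by ring
        _ = β * t ^ (-β) * x⁻¹ := by rw [hxpow]
    have h2 : (∫⁻ x in Ico 1 t, ENNReal.ofReal (β * x ^ (-β - 1)) * g x)
        = ∫⁻ x in Ico 1 t, ENNReal.ofReal (β * t ^ (-β) * x⁻¹) :=
      setLIntegral_congr_fun measurableSet_Ico h1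
    rw [h2, Measure.restrict_congr_set Ico_ae_eq_Ioc]
    have hcont : ContinuousOn (fun x : ℝ => β * t ^ (-β) * x⁻¹) (Icc 1 t) :=
      continuousOn_const.mul (continuousOn_id.inv₀ fun x hx =>
        (lt_of_lt_of_le one_pos hx.1).ne')
    have hint : Integrable (fun x : ℝ => β * t ^ (-β) * x⁻¹) (volume.restrict (Ioc 1 t)) :=
      (hcont.integrableOn_Icc).mono_set Ioc_subset_Icc_self
    have hnn : 0 ≤ᵐ[volume.restrict (Ioc 1 t)] fun x : ℝ => β * t ^ (-β) * x⁻¹ := by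
      rw [Filter.EventuallyLE, ae_restrict_iff' measurableSet_Ioc]
      filter_upwards with x hx
      have hx0 : (0:ℝ) < x := lt_trans one_pos hx.1
      positivity
    rw [← ofReal_integral_eq_lintegral_ofReal hint hnn]
    congr 1
    rw [MeasureTheory.integral_const_mul, ← intervalIntegral.integral_of_le ht1.le,
      integral_inv_of_pos one_pos ht0, div_one]
  -- Term B
  have hB : (∫⁻ x in Ici t, ENNReal.ofReal (β * x ^ (-β - 1)) * g x)
      ≤ ENNReal.ofReal (t ^ (-β)) := by
    calc (∫⁻ x in Ici t, ENNReal.ofReal (β * x ^ (-β - 1)) * g x)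
        ≤ ∫⁻ x in Ici t, ENNReal.ofReal (β * x ^ (-β - 1)) := by
          refine lintegral_mono fun x => ?_
          calc ENNReal.ofReal (β * x ^ (-β - 1)) * g x
              ≤ ENNReal.ofReal (β * x ^ (-β - 1)) * 1 := mul_le_mul_right (hg1 x) _
            _ = ENNReal.ofReal (β * x ^ (-β - 1)) := mul_one _
      _ = ENNReal.ofReal (t ^ (-β)) := by
          rw [← Measure.restrict_congr_set Ioi_ae_eq_Ici, tail_lintegral β hβ ht0]
  -- algebraic identities
  have hR : t ^ (-β) = η ^ β * r ^ (-(α * β)) := by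
    rw [htdef, Real.div_rpow (Real.rpow_nonneg hr0.le α) hη.le, ← Real.rpow_mul hr0.le,
      Real.rpow_neg hη.le, division_def, inv_inv, mul_neg, mul_comm]
  have hlog : Real.log t = α * Real.log r - Real.log η := by
    rw [htdef, Real.log_div (Real.rpow_pos_of_pos hr0 α).ne' hη.ne', Real.log_rpow hr0]
  have hfinal : β * t ^ (-β) * Real.log t + t ^ (-β)
      ≤ η ^ β * (1 + β * |Real.log η|) * r ^ (-(α * β))
        + η ^ β * (β * α) * r ^ (-(α * β)) * Real.log r := by
    rw [hR, hlog]
    have h1 : 0 ≤ |Real.log η| + Real.log η := by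
      have := neg_abs_le (Real.log η); linarith
    have h2 : (0:ℝ) < η ^ β * r ^ (-(α * β)) := by positivity
    nlinarith [mul_nonneg (mul_nonneg h2.le hβ.le) h1]
  calc ((pareto β).prod (pareto β)) {p : ℝ × ℝ | t ≤ p.1 * p.2}
      = _ := key
    _ ≤ ENNReal.ofReal (β * t ^ (-β) * Real.log t) + ENNReal.ofReal (t ^ (-β)) := by
        rw [hA]; exact add_le_add le_rfl hB
    _ = ENNReal.ofReal (β * t ^ (-β) * Real.log t + t ^ (-β)) := by
        rw [← ENNReal.ofReal_add (mul_nonneg (by positivity) (Real.log_nonneg ht1.le))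
          (by positivity)]
    _ ≤ ENNReal.ofReal (η ^ β * (1 + β * |Real.log η|) * r ^ (-(α * β))
          + η ^ β * (β * α) * r ^ (-(α * β)) * Real.log r) :=
        ENNReal.ofReal_le_ofReal hfinal
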